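/- Let n ≥ 2 be even and let μ ∈ ℝ satisfy a_{n/2−1}(μ) = 0. Then a_{n−1}(μ) = 0 and a_{n−2}(μ) = −1. -/
import Mathlib


noncomputable def a (μ : ℝ) : ℕ → ℝ
  | 0 => 1
  | 1 => 2 * (1 - μ)
  | n + 2 => 2 * (1 - μ) * a μ (n + 1) - a μ n

lemma a_add (μ : ℝ) (p q : ℕ) :
    a μ (p + q + 2) = a μ (p + 1) * a μ (q + 1) - a μ p * a μ q := by
  induction q using Nat.twoStepInduction with
  | zero => simp [a]; ring
  | one =>
      show a μ (p + 3) = _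
      have h3 : a μ (p + 3) = 2 * (1 - μ) * a μ (p + 2) - a μ (p + 1) := rfl
      have h2 : a μ (p + 2) = 2 * (1 - μ) * a μ (p + 1) - a μ p := rfl
      simp [h3, h2, a]; ring
  | more k ih1 ih2 =>
      have e1 : p + (k + 2) + 2 = (p + k + 2) + 2 := by ring
      have e2 : p + (k + 1) + 2 = (p + k + 2) + 1 := by ring
      have h1 : a μ ((p + k + 2) + 2)
          = 2 * (1 - μ) * a μ ((p + k + 2) + 1) - a μ (p + k + 2) := rfl
      have hq : a μ (k + 2 + 1) = 2 * (1 - μ) * a μ (k + 2) - a μ (k + 1) := rfl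
      have hq2 : a μ (k + 2) = 2 * (1 - μ) * a μ (k + 1) - a μ k := rfl
      rw [e1, h1, ← e2, ih2, ih1, hq, hq2]
      ring

lemma a_pell (μ : ℝ) (k : ℕ) :
    a μ k * a μ (k + 2) - a μ (k + 1) * a μ (k + 1) = -1 := by
  induction k with
  | zero => simp [a]
  | succ k ih =>
      have h3 : a μ (k + 3) = 2 * (1 - μ) * a μ (k + 2) - a μ (k + 1) := rfl
      have h2 : a μ (k + 2) = 2 * (1 - μ) * a μ (k + 1) - a μ k := rfl
      have : a μ (k + 1) * a μ (k + 1 + 2) - a μ (k + 2) * a μ (k + 2)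
          = a μ k * a μ (k + 2) - a μ (k + 1) * a μ (k + 1) := by
        rw [show k + 1 + 2 = k + 3 from rfl, h3]
        nth_rewrite 3 [h2]
        ring
      rw [this, ih]

theorem stmt14 (n : ℕ) (hn : 2 ≤ n) (heven : Even n) (μ : ℝ)
    (h : a μ (n / 2 - 1) = 0) :
    a μ (n - 1) = 0 ∧ a μ (n - 2) = -1 := by
  obtain ⟨m, rfl⟩ := heven
  have hm : 1 ≤ m := by omega
  have hdiv : (m + m) / 2 = m := by omega
  rw [hdiv] at h
  rcases Nat.lt_or_ge m 2 with hm2 | hm2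
  · interval_cases m
    · simp [a] at h
  · obtain ⟨k, rfl⟩ : ∃ k, m = k + 2 := ⟨m - 2, by omega⟩
    have h' : a μ (k + 1) = 0 := by simpa using h
    have h2 : a μ (k + 2) = 2 * (1 - μ) * a μ (k + 1) - a μ k := rfl
    have hsq : a μ k * a μ k = 1 := by
      have := a_pell μ k
      rw [h', h2, h'] at this
      nlinarith [this]
    constructor
    · have e : k + 2 + (k + 2) - 1 = k + (k + 1) + 2 := by omega
      rw [e, a_add, h']
      ring
    · have e : k + 2 + (k + 2) - 2 = k + k + 2 := by omega
      rw [e, a_add, h', hsq]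
      ring
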